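/- In the expanded network G_E, every directed circuit φ_E projects to a directed circuit φ in G with secondary cost C(φ) = 0 and the same primary length L(φ_E) = L(φ). Consequently, if every circuit in G with C(φ) = 0 has L(φ) > 0, then every circuit in G_E has positive length. -/

import Mathlib

def arcCost {V : Type*} (γ : V → V → ℤ) (p : List V) : ℤ :=
  ((p.zip p.tail).map fun q => γ q.1 q.2).sum

def IsWalk {V : Type*} (A : V → V → Prop) (i j : V) (p : List V) : Prop :=
  p.Chain' A ∧ p.head? = some i ∧ p.getLast? = some j

def IsPath {V : Type*} (A : V → V → Prop) (i j : V) (p : List V) : Prop :=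
  IsWalk A i j p ∧ p.Nodup

/-- A directed circuit: a walk of at least one arc whose first and last nodes coincide. -/
def IsCircuit {V : Type*} (A : V → V → Prop) (p : List V) : Prop :=
  p.Chain' A ∧ 2 ≤ p.length ∧ p.head? = p.getLast?
/-- Arcs of the expanded network `G_E`: node `(i,c)` (node `i` at secondary-cost level
`c`, `0 ≤ c`) is joined to `(j, c + σ i j)` whenever `(i,j)` is an arc of `G` and the
budget `Cmax` is not exceeded. -/
def ArcE {V : Type*} (A : V → V → Prop) (σ : V → V → ℤ) (Cmax : ℤ) :
    V × ℤ → V × ℤ → Prop :=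
  fun a b => A a.1 b.1 ∧ 0 ≤ a.2 ∧ b.2 = a.2 + σ a.1 b.1 ∧ b.2 ≤ Cmax

/-- Primary costs on the expanded network: an expanded arc inherits the cost of the
underlying arc. -/
def γE {V : Type*} (γ : V → V → ℤ) : V × ℤ → V × ℤ → ℤ :=
  fun a b => γ a.1 b.1


lemma arcCost_cons_cons {V : Type*} (γ : V → V → ℤ) (x y : V) (l : List V) :
    arcCost γ (x :: y :: l) = γ x y + arcCost γ (y :: l) := by
  simp [arcCost]

lemma arcCost_map_fst {V : Type*} (γ : V → V → ℤ) (pE : List (V × ℤ)) :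
    arcCost (γE γ) pE = arcCost γ (pE.map Prod.fst) := by
  induction pE with
  | nil => simp [arcCost]
  | cons x l ih =>
    cases l with
    | nil => simp [arcCost]
    | cons y t =>
      simp only [List.map_cons] at *
      rw [arcCost_cons_cons, arcCost_cons_cons, ih]
      rfl

lemma arcCost_tele {V : Type*} (A : V → V → Prop) (σ : V → V → ℤ) (Cmax : ℤ) :
    ∀ (pE : List (V × ℤ)), pE.Chain' (ArcE A σ Cmax) → ∀ a b,
      pE.head? = some a → pE.getLast? = some b →
      arcCost σ (pE.map Prod.fst) = b.2 - a.2 := by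
  intro pE
  induction pE with
  | nil => simp
  | cons x l ih =>
    cases l with
    | nil =>
      intro _ a b ha hb
      simp at ha hb
      subst ha; subst hb
      simp [arcCost]
    | cons y t =>
      intro hch a b ha hb
      simp only [List.Chain', List.isChain_cons_cons] at hch
      have h1 := hch.1
      simp only [List.head?_cons, Option.some.injEq] at ha
      subst ha
      rw [List.getLast?_cons_cons] at hb
      have hrest := ih hch.2 y b rfl hb
      simp only [List.map_cons] at *
      rw [arcCost_cons_cons, hrest]
      have := h1.2.2.1
      simp only [this]
      ring

/-- every circuit of `G_E` projects onto a circuit of `G` with secondary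
cost zero and the same primary length; consequently, if every zero-secondary-cost
circuit of `G` has positive length, every circuit of `G_E` has positive length. -/
theorem expanded_circuits_positive {V : Type*} (A : V → V → Prop)
    (γ σ : V → V → ℤ) (Cmax : ℤ)
    (hσ : ∀ i j, A i j → 0 ≤ σ i j)
    (hcircσ : ∀ p, IsCircuit A p → 0 ≤ arcCost σ p) :
    (∀ pE, IsCircuit (ArcE A σ Cmax) pE →
        IsCircuit A (pE.map Prod.fst) ∧
        arcCost σ (pE.map Prod.fst) = 0 ∧
        arcCost (γE γ) pE = arcCost γ (pE.map Prod.fst)) ∧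
      ((∀ p, IsCircuit A p → arcCost σ p = 0 → 0 < arcCost γ p) →
        ∀ pE, IsCircuit (ArcE A σ Cmax) pE → 0 < arcCost (γE γ) pE) := by
  have key : ∀ pE, IsCircuit (ArcE A σ Cmax) pE →
      IsCircuit A (pE.map Prod.fst) ∧
      arcCost σ (pE.map Prod.fst) = 0 ∧
      arcCost (γE γ) pE = arcCost γ (pE.map Prod.fst) := by
    intro pE hpE
    obtain ⟨hch, hlen, hcyc⟩ := hpE
    have hchA : (pE.map Prod.fst).Chain' A := by
      show List.IsChain _ _
      rw [List.isChain_map]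
      exact List.IsChain.imp (fun _ _ h => h.1) hch
    obtain ⟨a, ha⟩ : ∃ a, pE.head? = some a := by
      cases pE with
      | nil => simp at hlen
      | cons x l => exact ⟨x, rfl⟩
    have hb : pE.getLast? = some a := hcyc ▸ ha
    have htele := arcCost_tele A σ Cmax pE hch a a ha hb
    have hσ0 : arcCost σ (pE.map Prod.fst) = 0 := by rw [htele]; ring
    refine ⟨⟨hchA, by simpa using hlen, ?_⟩, hσ0, arcCost_map_fst γ pE⟩
    rw [List.head?_map, List.getLast?_map, hcyc]
  refine ⟨key, fun h pE hpE => ?_⟩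
  obtain ⟨hcirc, hσ0, heq⟩ := key pE hpE
  rw [heq]
  exact h _ hcirc hσ0
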